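/- Let G be a finite simple undirected graph and let d ≥ 1 be an integer with deg_G(x) ≤ d for every vertex x. Build a flow network N with vertex set {s, t} ⊔ V(G) ⊔ E(G) and the following arcs: for each x ∈ V(G), an arc s → x of capacity d (the set E₁); for each edge e = {x, y} ∈ E(G), arcs x → e and y → e of capacity 1 (the set E₂); for each e ∈ E(G), an arc e → t of capacity 1 (the set E₃); and for each x ∈ V(G), an arc x → t of capacity d − deg_G(x) (the set E₄). If G has an independent set S with |S| = k, then N admits a feasible integral flow f of value k·d such that the set of arcs of E₁ carrying positive flow is exactly {s → x : x ∈ S} (in particular, exactly k arcs of E₁ carry positive flow). -/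

import Mathlib

open scoped BigOperators

/-- Vertices of the flow network `N`: a source `s`, a sink `t`, a vertex for each
vertex of `G`, and a vertex for each (potential) edge of `G`. -/
inductive NetV (V : Type*) where
  | s : NetV V
  | t : NetV V
  | vert : V → NetV V
  | edge : Sym2 V → NetV V
  deriving DecidableEq

instance {V : Type*} [Fintype V] [DecidableEq V] : Fintype (NetV V) :=
  Fintype.ofEquiv (Option (Option (V ⊕ Sym2 V)))
    { toFun := fun x => match x with
        | none => NetV.s
        | some none => NetV.t
        | some (some (Sum.inl v)) => NetV.vert v
        | some (some (Sum.inr e)) => NetV.edge e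
      invFun := fun x => match x with
        | NetV.s => none
        | NetV.t => some none
        | NetV.vert v => some (some (Sum.inl v))
        | NetV.edge e => some (some (Sum.inr e))
      left_inv := by rintro (_ | _ | _ | _) <;> rfl
      right_inv := by rintro (_ | _ | _ | _) <;> rfl }

/-- Capacities of the network built from `G` and `d`: arcs `s → x` of capacity `d`
(the set `E₁`), arcs `x → e` of capacity `1` for `x` an endpoint of the edge `e`
(the set `E₂`), arcs `e → t` of capacity `1` (the set `E₃`), and arcs `x → t` of
capacity `d - deg_G(x)` (the set `E₄`); all other pairs get capacity `0`, i.e.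
are not arcs of the network. -/
def netCap {V : Type*} [Fintype V] [DecidableEq V] (G : SimpleGraph V)
    [DecidableRel G.Adj] (d : ℕ) : NetV V → NetV V → ℕ
  | NetV.s, NetV.vert _ => d
  | NetV.vert x, NetV.edge e => if e ∈ G.edgeSet ∧ x ∈ e then 1 else 0
  | NetV.edge e, NetV.t => if e ∈ G.edgeSet then 1 else 0
  | NetV.vert x, NetV.t => d - G.degree x
  | _, _ => 0

/-- `f` is a feasible integral flow: it respects the capacities, and flow is
conserved at every vertex other than the source `s` and the sink `t`. -/
def IsFeasibleFlow {N : Type*} [Fintype N] (cap : N → N → ℕ) (s t : N)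
    (f : N → N → ℕ) : Prop :=
  (∀ a b : N, f a b ≤ cap a b) ∧
    ∀ v : N, v ≠ s → v ≠ t → (∑ u : N, f u v) = (∑ u : N, f v u)

def netEquiv (V : Type*) : Option (Option (V ⊕ Sym2 V)) ≃ NetV V where
  toFun := fun x => match x with
    | none => NetV.s
    | some none => NetV.t
    | some (some (Sum.inl v)) => NetV.vert v
    | some (some (Sum.inr e)) => NetV.edge e
  invFun := fun x => match x with
    | NetV.s => none
    | NetV.t => some none
    | NetV.vert v => some (some (Sum.inl v))
    | NetV.edge e => some (some (Sum.inr e))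
  left_inv := by rintro (_ | _ | _ | _) <;> rfl
  right_inv := by rintro (_ | _ | _ | _) <;> rfl

lemma sum_netV {V : Type*} [Fintype V] [DecidableEq V] (g : NetV V → ℕ) :
    ∑ u : NetV V, g u
      = g NetV.s + g NetV.t + (∑ x : V, g (NetV.vert x)) + ∑ e : Sym2 V, g (NetV.edge e) := by
  rw [← Equiv.sum_comp (netEquiv V) g]
  simp [netEquiv, Fintype.sum_option, Fintype.sum_sum_type]
  ring

def myFlow {V : Type*} [Fintype V] [DecidableEq V] (G : SimpleGraph V)
    [DecidableRel G.Adj] (d : ℕ) (S : Finset V) : NetV V → NetV V → ℕ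
  | NetV.s, NetV.vert x => if x ∈ S then d else 0
  | NetV.vert x, NetV.edge e => if x ∈ S ∧ e ∈ G.edgeSet ∧ x ∈ e then 1 else 0
  | NetV.edge e, NetV.t => if e ∈ G.edgeSet ∧ ∃ x ∈ S, x ∈ e then 1 else 0
  | NetV.vert x, NetV.t => if x ∈ S then d - G.degree x else 0
  | _, _ => 0

lemma deg_sum {V : Type*} [Fintype V] [DecidableEq V] (G : SimpleGraph V)
    [DecidableRel G.Adj] (x : V) :
    (∑ e : Sym2 V, if e ∈ G.edgeSet ∧ x ∈ e then 1 else 0) = G.degree x := by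
  rw [Finset.sum_boole]
  rw [← SimpleGraph.card_incidenceFinset_eq_degree]
  norm_cast
  congr 1
  ext e
  simp [SimpleGraph.mem_incidenceFinset, SimpleGraph.incidenceSet]

lemma edge_in_sum {V : Type*} [Fintype V] [DecidableEq V] (G : SimpleGraph V)
    [DecidableRel G.Adj] (S : Finset V)
    (hind : ∀ x ∈ S, ∀ y ∈ S, ¬G.Adj x y) (e : Sym2 V) :
    (∑ x : V, if x ∈ S ∧ e ∈ G.edgeSet ∧ x ∈ e then 1 else 0)
      = if e ∈ G.edgeSet ∧ ∃ x ∈ S, x ∈ e then 1 else 0 := by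
  by_cases he : e ∈ G.edgeSet
  · induction e with
    | _ a b =>
      have hadj : G.Adj a b := he
      have hne : a ≠ b := hadj.ne
      by_cases ha : a ∈ S <;> by_cases hb : b ∈ S
      · exact absurd hadj (hind a ha b hb)
      · have h1 : ∀ x : V, (x ∈ S ∧ x ∈ (s(a, b) : Sym2 V)) ↔ x = a := by
          intro x
          simp only [Sym2.mem_iff]
          constructor
          · rintro ⟨hx, rfl | rfl⟩ <;> [rfl; exact absurd hx hb]
          · rintro rfl; exact ⟨ha, Or.inl rfl⟩
        simp only [he, true_and]
        rw [Finset.sum_congr rfl (fun x _ => by rw [if_congr (h1 x) rfl rfl])]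
        simp only [Finset.sum_ite_eq', Finset.mem_univ, if_true, Sym2.mem_iff]
        exact (if_pos ⟨a, ha, Or.inl rfl⟩).symm
      · have h1 : ∀ x : V, (x ∈ S ∧ x ∈ (s(a, b) : Sym2 V)) ↔ x = b := by
          intro x
          simp only [Sym2.mem_iff]
          constructor
          · rintro ⟨hx, rfl | rfl⟩ <;> [exact absurd hx ha; rfl]
          · rintro rfl; exact ⟨hb, Or.inr rfl⟩
        simp only [he, true_and]
        rw [Finset.sum_congr rfl (fun x _ => by rw [if_congr (h1 x) rfl rfl])]
        simp only [Finset.sum_ite_eq', Finset.mem_univ, if_true, Sym2.mem_iff]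
        exact (if_pos ⟨b, hb, Or.inr rfl⟩).symm
      · have h1 : ∀ x : V, ¬(x ∈ S ∧ x ∈ (s(a, b) : Sym2 V)) := by
          intro x
          simp only [Sym2.mem_iff]
          rintro ⟨hx, rfl | rfl⟩ <;> [exact ha hx; exact hb hx]
        simp only [he, true_and]
        rw [Finset.sum_congr rfl (fun x _ => by
          rw [if_neg (h1 x)])]
        simp only [Finset.sum_const_zero, Sym2.mem_iff]
        exact (if_neg (by rintro ⟨x, hx, rfl | rfl⟩ <;> simp_all)).symm
  · simp [he]

/-- If `G` has an independent set `S` of size `k`, then the network admits a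
feasible integral flow of value `k·d` such that the arcs of `E₁` carrying positive
flow are exactly the arcs `s → x` with `x ∈ S`. -/
theorem independentSet_gives_flow {V : Type*} [Fintype V] [DecidableEq V]
    (G : SimpleGraph V) [DecidableRel G.Adj] (d : ℕ) (hd : 1 ≤ d)
    (hdeg : ∀ x : V, G.degree x ≤ d) (k : ℕ) (S : Finset V)
    (hind : ∀ x ∈ S, ∀ y ∈ S, ¬G.Adj x y) (hcard : S.card = k) :
    ∃ f : NetV V → NetV V → ℕ,
      IsFeasibleFlow (netCap G d) NetV.s NetV.t f ∧
      (∑ u : NetV V, f NetV.s u) - (∑ u : NetV V, f u NetV.s) = k * d ∧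
      ∀ x : V, 0 < f NetV.s (NetV.vert x) ↔ x ∈ S := by
  refine ⟨myFlow G d S, ⟨?_, ?_⟩, ?_, ?_⟩
  · rintro (_ | _ | a | a) (_ | _ | b | b) <;>
      simp only [myFlow, netCap] <;>
      first
      | rfl
      | (split_ifs <;> first | omega | tauto)
  · rintro (_ | _ | x | e) hs ht
    · exact absurd rfl hs
    · exact absurd rfl ht
    · rw [sum_netV, sum_netV]
      simp only [myFlow]
      rw [Finset.sum_const_zero]
      by_cases hx : x ∈ S
      · simp only [hx, if_true, true_and]
        rw [deg_sum]
        have := hdeg x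
        simp only [Finset.sum_const_zero]
        omega
      · simp only [hx, if_false, false_and, if_false, Finset.sum_const_zero]
    · rw [sum_netV, sum_netV]
      simp only [myFlow]
      rw [edge_in_sum G S hind e]
      simp
  · rw [sum_netV, sum_netV]
    simp only [myFlow]
    rw [Finset.sum_ite_mem]
    simp [Finset.inter_comm, Finset.univ_inter, ← hcard, Finset.sum_const, mul_comm]
  · intro x
    simp only [myFlow]
    split_ifs with h <;> simp [h]; omega
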